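/- Define U(x,y) = (1/4)·(x choose y)^4 · ((x-y+1)(y+1)/((x+1)(x+2)))^{2x-3}. Then U(x,y) ≤ 1 for all integers x ≥ y ≥ 0 with (x,y) not in {(2,1),(0,0),(1,0),(1,1)}. -/

import Mathlib

lemma cb_sq_le (m : ℕ) : (3*m+1) * (Nat.centralBinom m)^2 ≤ 16^m := by
  induction m with
  | zero => simp [Nat.centralBinom]
  | succ n ih =>
    have key : (n+1) * Nat.centralBinom (n+1) = 2*(2*n+1) * Nat.centralBinom n :=
      Nat.succ_mul_centralBinom_succ n
    have h2 : (n+1)^2 * ((3*(n+1)+1) * (Nat.centralBinom (n+1))^2)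
        ≤ (n+1)^2 * 16^(n+1) := by
      have e1 : (n+1)^2 * ((3*(n+1)+1) * (Nat.centralBinom (n+1))^2)
          = (3*n+4) * (2*(2*n+1))^2 * (Nat.centralBinom n)^2 := by
        have : ((n+1) * Nat.centralBinom (n+1))^2 = (2*(2*n+1) * Nat.centralBinom n)^2 := by
          rw [key]
        ring_nf
        ring_nf at this
        nlinarith [this]
      rw [e1]
      have h3 : (3*n+4) * (2*(2*n+1))^2 ≤ 16 * (n+1)^2 * (3*n+1) := by nlinarith
      calc (3*n+4) * (2*(2*n+1))^2 * (Nat.centralBinom n)^2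
          ≤ 16 * (n+1)^2 * (3*n+1) * (Nat.centralBinom n)^2 :=
            Nat.mul_le_mul_right _ h3
        _ = 16 * (n+1)^2 * ((3*n+1) * (Nat.centralBinom n)^2) := by ring
        _ ≤ 16 * (n+1)^2 * 16^n := Nat.mul_le_mul_left _ ih
        _ = (n+1)^2 * 16^(n+1) := by ring
    exact Nat.le_of_mul_le_mul_left h2 (by positivity)


lemma middle_bound (x : ℕ) : (3*x+2)^2 * (x.choose (x/2))^4 ≤ 4 * 16^x := by
  rcases Nat.even_or_odd x with ⟨m, hm⟩ | ⟨m, hm⟩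
  · subst hm
    have hd : (m + m) / 2 = m := by omega
    rw [hd]
    have hc : (m+m).choose m = Nat.centralBinom m := by
      rw [Nat.centralBinom]; congr 1; ring
    rw [hc]
    have := cb_sq_le m
    have hpp : (16:ℕ)^(m+m) = (16^m)^2 := by rw [← pow_mul]; congr 1; ring
    calc (3*(m+m)+2)^2 * (Nat.centralBinom m)^4
        = 4 * ((3*m+1) * (Nat.centralBinom m)^2)^2 := by ring
      _ ≤ 4 * (16^m)^2 := Nat.mul_le_mul_left _ (Nat.pow_le_pow_left this 2)
      _ = 4 * 16^(m+m) := by rw [hpp]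
  · subst hm
    have hd : (2*m + 1) / 2 = m := by omega
    rw [hd]
    set c := (2*m+1).choose m with hc
    have hcb : Nat.centralBinom (m+1) = 2 * c := by
      rw [Nat.centralBinom]
      have h2 : 2*(m+1) = (2*m+1) + 1 := by ring
      rw [h2, Nat.choose_succ_succ']
      have hsym : (2*m+1).choose (m+1) = (2*m+1).choose m := by
        have := Nat.choose_symm (show m+1 ≤ 2*m+1 by omega)
        have he : 2*m+1 - (m+1) = m := by omega
        rw [he] at this
        exact this.symm
      rw [hsym, ← hc]; omega
    have hkey := cb_sq_le (m+1)
    -- (3m+4) * (2c)^2 ≤ 16^(m+1)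
    rw [hcb] at hkey
    -- square it: (3m+4)^2 * 16 * c^4 ≤ 16^(2m+2)
    have hsq : ((3*(m+1)+1) * (2*c)^2)^2 ≤ (16^(m+1))^2 := Nat.pow_le_pow_left hkey 2
    have hexp : ((16:ℕ)^(m+1))^2 = 16 * 16^(2*m+1) := by
      rw [← pow_mul]
      have : (m+1)*2 = (2*m+1)+1 := by ring
      rw [this, pow_succ]; ring
    rw [hexp] at hsq
    have h16 : 16 * ((3*m+4)^2 * c^4) ≤ 16 * 16^(2*m+1) := by
      calc 16 * ((3*m+4)^2 * c^4) = ((3*(m+1)+1) * (2*c)^2)^2 := by ring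
        _ ≤ 16 * 16^(2*m+1) := hsq
    have hmain : (3*m+4)^2 * c^4 ≤ 16^(2*m+1) := Nat.le_of_mul_le_mul_left h16 (by norm_num)
    calc (3*(2*m+1)+2)^2 * c^4 ≤ 4*(3*m+4)^2 * c^4 := by nlinarith [sq_nonneg c]
      _ = 4 * ((3*m+4)^2 * c^4) := by ring
      _ ≤ 4 * 16^(2*m+1) := Nat.mul_le_mul_left _ hmain

noncomputable section

/-- `U(x,y) = (1/4)·(x choose y)⁴ · ((x-y+1)(y+1)/((x+1)(x+2)))^(2x-3)`,
where the possibly negative exponent `2x-3` is interpreted as a real power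
of a positive rational. -/
def Ufun (x y : ℕ) : ℝ :=
  (1 / 4) * (x.choose y : ℝ) ^ 4 *
    (((((x : ℝ) - (y : ℝ) + 1) * ((y : ℝ) + 1)) /
        (((x : ℝ) + 1) * ((x : ℝ) + 2))) ^ (2 * (x : ℝ) - 3))


lemma Ufun_eval (x y : ℕ) (hx : 2 ≤ x) : Ufun x y =
    (1 / 4) * (x.choose y : ℝ) ^ 4 *
    (((((x : ℝ) - (y : ℝ) + 1) * ((y : ℝ) + 1)) /
        (((x : ℝ) + 1) * ((x : ℝ) + 2))) ^ (2 * x - 3 : ℕ)) := by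
  unfold Ufun
  rw [← Real.rpow_natCast _ (2*x-3)]
  congr 2
  have h3 : 3 ≤ 2*x := by omega
  push_cast [Nat.cast_sub h3]
  ring

/-- `U(x,y) ≤ 1` for all integers `x ≥ y ≥ 0` with
`(x,y) ∉ {(2,1),(0,0),(1,0),(1,1)}`. -/
theorem Ufun_le_one (x y : ℕ) (hxy : y ≤ x)
    (h1 : ¬ (x = 2 ∧ y = 1)) (h2 : ¬ (x = 0 ∧ y = 0))
    (h3 : ¬ (x = 1 ∧ y = 0)) (h4 : ¬ (x = 1 ∧ y = 1)) :
    Ufun x y ≤ 1 := by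
  by_cases hx7 : x ≤ 6
  · interval_cases x <;> interval_cases y <;>
      first
        | omega
        | (rw [Ufun_eval _ _ (by norm_num)]; norm_num [Nat.choose])
  · push_neg at hx7
    have hx : 2 ≤ x := by omega
    set n : ℕ := 2*x - 3 with hn
    rw [Ufun_eval x y hx]
    set X : ℝ := (x : ℝ) with hX
    set Y : ℝ := (y : ℝ) with hY
    have hYX : Y ≤ X := by rw [hX, hY]; exact_mod_cast hxy
    have hX7 : (7:ℝ) ≤ X := by rw [hX]; exact_mod_cast (show 7 ≤ x by omega)
    have hXpos : (0:ℝ) < X + 1 := by linarith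
    have hY0 : (0:ℝ) ≤ Y := Nat.cast_nonneg y
    set r : ℝ := ((X - Y + 1) * (Y + 1)) / ((X + 1) * (X + 2)) with hr
    have hr0 : 0 ≤ r := by
      apply div_nonneg <;> nlinarith
    have hrle : r ≤ (X+2) / (4*(X+1)) := by
      rw [hr, div_le_div_iff₀ (by nlinarith) (by nlinarith)]
      nlinarith [sq_nonneg (X - 2*Y)]
    have hsplit : (X+2) / (4*(X+1)) = (1/4) * ((X+2)/(X+1)) := by
      rw [div_mul_div_comm, one_mul]
    have hexp1 : (X+2)/(X+1) ≤ Real.exp (1/(X+1)) := by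
      have := Real.add_one_le_exp (1/(X+1))
      have heq : (X+2)/(X+1) = 1/(X+1) + 1 := by field_simp; ring
      rw [heq]; exact this
    have hnle : (n : ℝ) ≤ 2*(X+1) := by
      have : (n:ℝ) = 2*X - 3 := by
        rw [hn]; push_cast [Nat.cast_sub (show 3 ≤ 2*x by omega)]; ring
      rw [this]; linarith
    have hexp2 : (Real.exp (1/(X+1)))^n ≤ Real.exp 2 := by
      rw [← Real.exp_nat_mul]
      apply Real.exp_le_exp.mpr
      rw [mul_one_div, div_le_iff₀ hXpos]
      linarith
    have hrn : r ^ n ≤ (1/4)^n * Real.exp 2 := by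
      calc r ^ n ≤ ((X+2)/(4*(X+1)))^n := pow_le_pow_left₀ hr0 hrle n
        _ = (1/4)^n * ((X+2)/(X+1))^n := by rw [hsplit, mul_pow]
        _ ≤ (1/4)^n * (Real.exp (1/(X+1)))^n := by
            apply mul_le_mul_of_nonneg_left _ (by positivity)
            exact pow_le_pow_left₀ (by positivity) hexp1 n
        _ ≤ (1/4)^n * Real.exp 2 := by
            exact mul_le_mul_of_nonneg_left hexp2 (by positivity)
    have hC : ((x.choose y : ℝ))^4 ≤ 4 * 16^x / (3*X+2)^2 := by
      have hmid := middle_bound x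
      have hCle : (x.choose y : ℝ) ≤ (x.choose (x/2) : ℝ) :=
        Nat.cast_le.mpr (Nat.choose_le_middle y x)
      have hmidR : (3*X+2)^2 * ((x.choose (x/2) : ℝ))^4 ≤ 4 * 16^x := by
        have := (Nat.cast_le (α := ℝ)).mpr hmid
        push_cast at this
        convert this using 2 <;> push_cast <;> ring
      rw [le_div_iff₀ (by positivity)]
      calc ((x.choose y : ℝ))^4 * (3*X+2)^2
          ≤ ((x.choose (x/2) : ℝ))^4 * (3*X+2)^2 := by
            apply mul_le_mul_of_nonneg_right _ (by positivity)
            exact pow_le_pow_left₀ (by positivity) hCle 4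
        _ = (3*X+2)^2 * ((x.choose (x/2) : ℝ))^4 := by ring
        _ ≤ 4 * 16^x := hmidR
    have hchoose0 : (0:ℝ) ≤ (x.choose y : ℝ) := Nat.cast_nonneg _
    have h16 : (16:ℝ)^x = 4^n * 64 := by
      rw [show (16:ℝ) = 4^2 by norm_num, ← pow_mul, show 2*x = n + 3 by omega, pow_add]
      norm_num
    have hfinal : (1/4) * ((x.choose y : ℝ))^4 * (r ^ n)
        ≤ 64 * Real.exp 2 / (3*X+2)^2 := by
      calc (1/4) * ((x.choose y : ℝ))^4 * (r ^ n)
          ≤ (1/4) * ((x.choose y : ℝ))^4 * ((1/4)^n * Real.exp 2) := by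
            apply mul_le_mul_of_nonneg_left hrn (by positivity)
        _ ≤ (1/4) * (4 * 16^x / (3*X+2)^2) * ((1/4)^n * Real.exp 2) := by
            have hpos : (0:ℝ) ≤ (1/4)^n * Real.exp 2 := by positivity
            apply mul_le_mul_of_nonneg_right _ hpos
            apply mul_le_mul_of_nonneg_left hC (by norm_num)
        _ = 64 * Real.exp 2 / (3*X+2)^2 := by
            rw [h16, one_div, inv_pow]
            have h4n : (4:ℝ)^n ≠ 0 := by positivity
            have h32 : (3*X+2)^2 ≠ 0 := by positivity
            field_simp
    refine le_trans hfinal ?_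
    rw [div_le_one (by positivity)]
    have hexp2eq : Real.exp 2 = Real.exp 1 * Real.exp 1 := by
      rw [← Real.exp_add]; norm_num
    nlinarith [Real.exp_one_lt_d9, Real.exp_pos 1]
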